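/- arXiv:0803.2570 — 2 statements merged into one kernel-verified Lean document; each statement's English description precedes it below -/
import Mathlib

section
/- The lower bound E_fa,l on the false alarm exponent strictly exceeds the channel capacity: for a DMC W with all-positive entries, capacity-achieving input distribution P_X* and induced output distribution P_Y*, we have max_{i∈X} min{ D(V‖W|P_X*) : V channel with Σ_j V(·|j)P_X*(j) = W(·|i) } > max_{i∈X} D(W(·|i) ‖ P_Y*) whenever W(·|i) ≠ P_Y* for the maximizing i. -/
open scoped BigOperators

private lemma helper1 (a b : ℝ) (ha : 0 ≤ a) (hb : 0 < b) :
    a - b ≤ a * (Real.log a - Real.log b) := by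
  rcases eq_or_lt_of_le ha with h | h
  · rw [← h]; simp; linarith
  · have h1 := Real.log_le_sub_one_of_pos (div_pos hb h)
    rw [Real.log_div hb.ne' h.ne'] at h1
    have h2 : a * (Real.log b - Real.log a) ≤ a * (b / a - 1) :=
      mul_le_mul_of_nonneg_left h1 h.le
    have h3 : a * (b / a - 1) = b - a := by field_simp
    nlinarith

/-- The lower bound `E_fa,l` on the false alarm exponent strictly
exceeds the capacity expression `max_i D(W(·|i) ‖ P_Y*)`, provided every maximizer
`i` of the latter has `W(·|i) ≠ P_Y*`.  Here `P_X*` is a capacity-achieving input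
distribution and `P_Y*` the induced output distribution. -/
theorem stmt_3 {X Y : Type*} [Fintype X] [Fintype Y] [Nonempty X]
    (W : X → Y → ℝ) (hW : ∀ x y, 0 < W x y) (hWrow : ∀ x, ∑ y, W x y = 1)
    (Pstar : X → ℝ) (hPnn : ∀ x, 0 ≤ Pstar x) (hPsum : ∑ x, Pstar x = 1)
    (PYstar : Y → ℝ) (hPY : ∀ y, PYstar y = ∑ x, Pstar x * W x y)
    -- `Pstar` achieves capacity:
    (hcap : ∀ Q : X → ℝ, (∀ x, 0 ≤ Q x) → ∑ x, Q x = 1 →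
      ∑ x, ∑ y, Q x * W x y * Real.log (W x y / ∑ x', Q x' * W x' y)
        ≤ ∑ x, ∑ y, Pstar x * W x y * Real.log (W x y / ∑ x', Pstar x' * W x' y))
    -- every maximizer `i` of `D(W(·|i) ‖ P_Y*)` satisfies `W(·|i) ≠ P_Y*`:
    (hneq : ∀ i : X,
      (∀ j : X, ∑ y, W j y * Real.log (W j y / PYstar y)
          ≤ ∑ y, W i y * Real.log (W i y / PYstar y)) →
      (fun y => W i y) ≠ PYstar) :
    Finset.univ.sup' Finset.univ_nonempty
        (fun i : X => ∑ y, W i y * Real.log (W i y / PYstar y))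
      < Finset.univ.sup' Finset.univ_nonempty (fun i : X =>
          sInf { d : ℝ | ∃ V : X → Y → ℝ,
            (∀ x y, 0 ≤ V x y) ∧ (∀ x, ∑ y, V x y = 1) ∧
            (∀ y, ∑ x, Pstar x * V x y = W i y) ∧
            d = ∑ x, Pstar x * ∑ y, V x y * Real.log (V x y / W x y) }) := by
  classical
  obtain ⟨x0, hx0⟩ : ∃ x, 0 < Pstar x := by
    by_contra h
    push_neg at h
    have h1 : ∑ x, Pstar x ≤ 0 := Finset.sum_nonpos (fun x _ => h x)
    rw [hPsum] at h1; linarith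
  have hPYpos : ∀ y, 0 < PYstar y := by
    intro y
    rw [hPY]
    exact Finset.sum_pos' (fun x _ => mul_nonneg (hPnn x) (hW x y).le)
      ⟨x0, Finset.mem_univ _, mul_pos hx0 (hW x0 y)⟩
  have hPYsum : ∑ y, PYstar y = 1 := by
    simp only [hPY]
    rw [Finset.sum_comm]
    calc ∑ x, ∑ y, Pstar x * W x y = ∑ x, Pstar x * ∑ y, W x y := by
          simp [Finset.mul_sum]
      _ = 1 := by simp only [hWrow, mul_one]; exact hPsum
  set D : X → ℝ := fun j => ∑ y, W j y * Real.log (W j y / PYstar y) with hDdef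
  set C : ℝ := ∑ x, Pstar x * D x with hCdef
  -- the capacity RHS equals C
  have hcapC : ∀ Q : X → ℝ, (∀ x, 0 ≤ Q x) → ∑ x, Q x = 1 →
      ∑ x, ∑ y, Q x * W x y * Real.log (W x y / ∑ x', Q x' * W x' y) ≤ C := by
    intro Q h1 h2
    have h3 := hcap Q h1 h2
    simp only [← hPY] at h3
    calc ∑ x, ∑ y, Q x * W x y * Real.log (W x y / ∑ x', Q x' * W x' y)
        ≤ ∑ x, ∑ y, Pstar x * W x y * Real.log (W x y / PYstar y) := h3
      _ = C := by
          rw [hCdef]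
          refine Finset.sum_congr rfl fun x _ => ?_
          simp only [hDdef]
          rw [Finset.mul_sum]
          exact Finset.sum_congr rfl fun y _ => by ring
  -- KKT: every D j is at most C
  have hL1 : ∀ j, D j ≤ C := by
    intro j
    set K : ℝ := ∑ y, (W j y - PYstar y) ^ 2 / PYstar y with hK
    have hK0 : 0 ≤ K :=
      Finset.sum_nonneg fun y _ => div_nonneg (sq_nonneg _) (hPYpos y).le
    have key : ∀ t : ℝ, 0 < t → t ≤ 1 → t * (D j - C) ≤ t ^ 2 * K := by
      intro t ht0 ht1
      set Q : X → ℝ := fun x => (1 - t) * Pstar x + t * (if x = j then 1 else 0) with hQ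
      have hQ0 : ∀ x, 0 ≤ Q x := by
        intro x
        apply add_nonneg (mul_nonneg (by linarith) (hPnn x))
        apply mul_nonneg ht0.le
        split <;> norm_num
      have hQlin : ∀ f : X → ℝ,
          ∑ x, Q x * f x = (1 - t) * (∑ x, Pstar x * f x) + t * f j := by
        intro f
        have h : ∀ x, Q x * f x
            = (1 - t) * (Pstar x * f x) + t * (if x = j then f x else 0) := by
          intro x; simp only [hQ]; split <;> ring
        simp only [h]
        rw [Finset.sum_add_distrib, ← Finset.mul_sum, ← Finset.mul_sum,
          Finset.sum_ite_eq' Finset.univ j f]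
        simp
      have hQsum : ∑ x, Q x = 1 := by
        have := hQlin (fun _ => (1 : ℝ))
        simp only [mul_one] at this
        rw [hPsum] at this
        simpa using this
      set Pt : Y → ℝ := fun y => (1 - t) * PYstar y + t * W j y with hPt
      have hPtpos : ∀ y, 0 < Pt y := fun y =>
        add_pos_of_nonneg_of_pos (mul_nonneg (by linarith) (hPYpos y).le)
          (mul_pos ht0 (hW j y))
      have hQout : ∀ y, ∑ x, Q x * W x y = Pt y := by
        intro y
        have := hQlin (fun x => W x y)
        rw [this, ← hPY y]
      have hcapQ := hcapC Q hQ0 hQsum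
      simp only [hQout] at hcapQ
      have hterm : ∀ x y, Q x * W x y * Real.log (W x y / Pt y)
          = Q x * W x y * Real.log (W x y / PYstar y)
            - Q x * W x y * Real.log (Pt y / PYstar y) := by
        intro x y
        rw [Real.log_div (hW x y).ne' (hPtpos y).ne',
          Real.log_div (hW x y).ne' (hPYpos y).ne',
          Real.log_div (hPtpos y).ne' (hPYpos y).ne']
        ring
      have hsplit : ∑ x, ∑ y, Q x * W x y * Real.log (W x y / Pt y)
          = ((1 - t) * C + t * D j) - ∑ y, Pt y * Real.log (Pt y / PYstar y) := by
        calc ∑ x, ∑ y, Q x * W x y * Real.log (W x y / Pt y)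
            = ∑ x, ∑ y, (Q x * W x y * Real.log (W x y / PYstar y)
                - Q x * W x y * Real.log (Pt y / PYstar y)) :=
              Finset.sum_congr rfl fun x _ =>
                Finset.sum_congr rfl fun y _ => hterm x y
          _ = (∑ x, ∑ y, Q x * W x y * Real.log (W x y / PYstar y))
              - ∑ x, ∑ y, Q x * W x y * Real.log (Pt y / PYstar y) := by
              simp [Finset.sum_sub_distrib]
          _ = ((1 - t) * C + t * D j) - ∑ y, Pt y * Real.log (Pt y / PYstar y) := by
              congr 1
              · have h1 : ∀ x, ∑ y, Q x * W x y * Real.log (W x y / PYstar y)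
                    = Q x * D x := by
                  intro x
                  simp only [hDdef]
                  rw [Finset.mul_sum]
                  exact Finset.sum_congr rfl fun y _ => by ring
                simp only [h1]
                rw [hQlin D, ← hCdef]
              · rw [Finset.sum_comm]
                refine Finset.sum_congr rfl fun y _ => ?_
                rw [← Finset.sum_mul, hQout y]
      rw [hsplit] at hcapQ
      have h2 : t * (D j - C) ≤ ∑ y, Pt y * Real.log (Pt y / PYstar y) := by
        linarith
      have hb1 : ∑ y, Pt y * Real.log (Pt y / PYstar y)
          ≤ ∑ y, (Pt y ^ 2 / PYstar y - Pt y) := by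
        apply Finset.sum_le_sum
        intro y _
        have h1 := Real.log_le_sub_one_of_pos (div_pos (hPtpos y) (hPYpos y))
        have h2 : Pt y * Real.log (Pt y / PYstar y)
            ≤ Pt y * (Pt y / PYstar y - 1) :=
          mul_le_mul_of_nonneg_left h1 (hPtpos y).le
        have h3 : Pt y * (Pt y / PYstar y - 1) = Pt y ^ 2 / PYstar y - Pt y := by
          ring
        linarith
      have hb2 : ∑ y, (Pt y ^ 2 / PYstar y - Pt y) = t ^ 2 * K := by
        have h : ∀ y, Pt y ^ 2 / PYstar y - Pt y
            = t * (W j y - PYstar y)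
              + t ^ 2 * ((W j y - PYstar y) ^ 2 / PYstar y) := by
          intro y
          have hy := (hPYpos y).ne'
          simp only [hPt]
          field_simp
          ring
        simp only [h]
        rw [Finset.sum_add_distrib, ← Finset.mul_sum, ← Finset.mul_sum,
          Finset.sum_sub_distrib, hWrow, hPYsum, hK]
        ring
      linarith
    by_contra hcon
    push_neg at hcon
    have hδ : 0 < D j - C := by linarith
    set t : ℝ := min 1 ((D j - C) / (K + 1)) with htdef
    have ht0 : 0 < t := lt_min one_pos (div_pos hδ (by linarith))
    have ht1 : t ≤ 1 := min_le_left _ _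
    have h2 := key t ht0 ht1
    have h3 : D j - C ≤ t * K := by
      have h4 : t * (D j - C) ≤ t * (t * K) := by nlinarith
      have := (mul_le_mul_iff_right₀ ht0).mp h4
      nlinarith
    have h4 : t * K ≤ (D j - C) / (K + 1) * K :=
      mul_le_mul_of_nonneg_right (min_le_right _ _) hK0
    have h5 : (D j - C) / (K + 1) * K < D j - C := by
      rw [div_mul_eq_mul_div, div_lt_iff₀ (by linarith : (0:ℝ) < K + 1)]
      nlinarith
    linarith
  -- KKT equality at x0
  have hDx0 : D x0 = C := by
    by_contra hne
    have hlt : D x0 < C := lt_of_le_of_ne (hL1 x0) hne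
    have hs : ∑ x, Pstar x * D x < ∑ x, Pstar x * C := by
      apply Finset.sum_lt_sum
      · intro x _; exact mul_le_mul_of_nonneg_left (hL1 x) (hPnn x)
      · exact ⟨x0, Finset.mem_univ _, by nlinarith⟩
    rw [← Finset.sum_mul, hPsum, one_mul, ← hCdef] at hs
    exact lt_irrefl C hs
  -- x0 is a maximizer, so W x0 ≠ PYstar
  have hne : (fun y => W x0 y) ≠ PYstar := by
    apply hneq x0
    intro j
    have h1 := hL1 j
    rw [← hDx0] at h1
    simpa only [hDdef] using h1
  obtain ⟨y0, hy0⟩ : ∃ y, W x0 y ≠ PYstar y := by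
    by_contra h; push_neg at h; exact hne (funext h)
  -- the key constant
  set c : Y → ℝ := fun y => W x0 y / PYstar y with hcdef
  have hcpos : ∀ y, 0 < c y := fun y => div_pos (hW x0 y) (hPYpos y)
  set s : ℝ := ∑ y, W x0 y * c y with hsdef
  have hs1 : s = 1 + ∑ y, (W x0 y - PYstar y) ^ 2 / PYstar y := by
    have h : ∀ y, W x0 y * c y
        = PYstar y + (W x0 y - PYstar y) ^ 2 / PYstar y
          + 2 * (W x0 y - PYstar y) := by
      intro y
      have hy := (hPYpos y).ne'
      simp only [hcdef]
      field_simp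
      ring
    rw [hsdef]
    simp only [h]
    rw [Finset.sum_add_distrib, Finset.sum_add_distrib, hPYsum,
      ← Finset.mul_sum, Finset.sum_sub_distrib, hWrow, hPYsum]
    ring
  have hsgt1 : 1 < s := by
    rw [hs1]
    have hpos : 0 < ∑ y, (W x0 y - PYstar y) ^ 2 / PYstar y := by
      apply Finset.sum_pos' (fun y _ => div_nonneg (sq_nonneg _) (hPYpos y).le)
      refine ⟨y0, Finset.mem_univ _, div_pos ?_ (hPYpos y0)⟩
      exact lt_of_le_of_ne (sq_nonneg _)
        (Ne.symm (pow_ne_zero 2 (sub_ne_zero.mpr hy0)))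
    linarith
  have hspos : (0:ℝ) < s := by linarith
  set ε : ℝ := Pstar x0 * (s - 1 - Real.log s) with hεdef
  have hεpos : 0 < ε := by
    apply mul_pos hx0
    have := Real.log_lt_sub_one_of_pos hspos (by linarith : s ≠ 1)
    linarith
  -- Σ_x Pstar x * (Σ_y W x y c y) = 1
  have hsum1 : ∑ x, Pstar x * ∑ y, W x y * c y = 1 := by
    have h1 : ∀ x, Pstar x * ∑ y, W x y * c y
        = ∑ y, Pstar x * W x y * c y := by
      intro x; rw [Finset.mul_sum]
      exact Finset.sum_congr rfl fun y _ => by ring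
    simp only [h1]
    rw [Finset.sum_comm]
    have h2 : ∀ y, ∑ x, Pstar x * W x y * c y = W x0 y := by
      intro y
      rw [← Finset.sum_mul, ← hPY y]
      simp only [hcdef]
      rw [mul_comm, div_mul_cancel₀ _ (hPYpos y).ne']
    simp only [h2]
    exact hWrow x0
  -- lower bound on every element of the feasible-d set at x0
  set S : Set ℝ := { d : ℝ | ∃ V : X → Y → ℝ,
      (∀ x y, 0 ≤ V x y) ∧ (∀ x, ∑ y, V x y = 1) ∧
      (∀ y, ∑ x, Pstar x * V x y = W x0 y) ∧
      d = ∑ x, Pstar x * ∑ y, V x y * Real.log (V x y / W x y) } with hSdef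
  have hbound : ∀ d ∈ S, C + ε ≤ d := by
    rintro d ⟨V, hV0, hVrow, hVc, hd⟩
    -- D x0 expressed through V
    have hDc : D x0 = ∑ x, Pstar x * ∑ y, V x y * Real.log (c y) := by
      calc D x0 = ∑ y, W x0 y * Real.log (c y) := by simp only [hDdef, hcdef]
        _ = ∑ y, (∑ x, Pstar x * V x y) * Real.log (c y) :=
            Finset.sum_congr rfl fun y _ => by rw [hVc y]
        _ = ∑ y, ∑ x, Pstar x * (V x y * Real.log (c y)) := by
            refine Finset.sum_congr rfl fun y _ => ?_
            rw [Finset.sum_mul]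
            exact Finset.sum_congr rfl fun x _ => by ring
        _ = ∑ x, Pstar x * ∑ y, V x y * Real.log (c y) := by
            rw [Finset.sum_comm]
            exact Finset.sum_congr rfl fun x _ => (Finset.mul_sum _ _ _).symm
    have hA : ∑ x, Pstar x *
          ∑ y, V x y * (Real.log (V x y / W x y) - Real.log (c y))
        = d - D x0 := by
      rw [hd, hDc, ← Finset.sum_sub_distrib]
      refine Finset.sum_congr rfl fun x _ => ?_
      rw [← mul_sub, ← Finset.sum_sub_distrib]
      congr 1
      exact Finset.sum_congr rfl fun y _ => by ring
    -- bound for general x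
    have hB : ∀ x, 1 - (∑ y, W x y * c y)
        ≤ ∑ y, V x y * (Real.log (V x y / W x y) - Real.log (c y)) := by
      intro x
      have hterm : ∀ y, V x y - W x y * c y
          ≤ V x y * (Real.log (V x y / W x y) - Real.log (c y)) := by
        intro y
        rcases eq_or_lt_of_le (hV0 x y) with h | h
        · rw [← h]
          simp only [zero_mul, zero_sub]
          exact neg_nonpos.mpr (le_of_lt (mul_pos (hW x y) (hcpos y)))
        · have e1 : Real.log (V x y / W x y) - Real.log (c y)
              = Real.log (V x y) - Real.log (W x y * c y) := by
            rw [Real.log_div h.ne' (hW x y).ne',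
              Real.log_mul (hW x y).ne' (hcpos y).ne']
            ring
          rw [e1]
          exact helper1 _ _ (hV0 x y) (mul_pos (hW x y) (hcpos y))
      calc 1 - ∑ y, W x y * c y = ∑ y, (V x y - W x y * c y) := by
            rw [Finset.sum_sub_distrib, hVrow x]
        _ ≤ _ := Finset.sum_le_sum fun y _ => hterm y
    -- sharper bound at x0
    have hC2 : -Real.log s
        ≤ ∑ y, V x0 y * (Real.log (V x0 y / W x0 y) - Real.log (c y)) := by
      have hterm : ∀ y, V x0 y - W x0 y * c y / s
          ≤ V x0 y * (Real.log (V x0 y / W x0 y) - Real.log (c y) + Real.log s) := by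
        intro y
        rcases eq_or_lt_of_le (hV0 x0 y) with h | h
        · rw [← h]
          simp only [zero_mul, zero_sub]
          exact neg_nonpos.mpr
            (le_of_lt (div_pos (mul_pos (hW x0 y) (hcpos y)) hspos))
        · have e1 : Real.log (V x0 y / W x0 y) - Real.log (c y) + Real.log s
              = Real.log (V x0 y) - Real.log (W x0 y * c y / s) := by
            rw [Real.log_div h.ne' (hW x0 y).ne',
              Real.log_div (mul_pos (hW x0 y) (hcpos y)).ne' hspos.ne',
              Real.log_mul (hW x0 y).ne' (hcpos y).ne']
            ring
          rw [e1]
          exact helper1 _ _ (hV0 x0 y) (div_pos (mul_pos (hW x0 y) (hcpos y)) hspos)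
      have hsum := Finset.sum_le_sum fun y (_ : y ∈ Finset.univ) => hterm y
      rw [Finset.sum_sub_distrib, hVrow x0] at hsum
      have h1 : ∑ y, W x0 y * c y / s = 1 := by
        rw [← Finset.sum_div, ← hsdef, div_self hspos.ne']
      rw [h1] at hsum
      have h2 : ∑ y, V x0 y * (Real.log (V x0 y / W x0 y) - Real.log (c y) + Real.log s)
          = (∑ y, V x0 y * (Real.log (V x0 y / W x0 y) - Real.log (c y)))
            + Real.log s := by
        have h3 : ∀ y, V x0 y * (Real.log (V x0 y / W x0 y) - Real.log (c y) + Real.log s)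
            = V x0 y * (Real.log (V x0 y / W x0 y) - Real.log (c y))
              + V x0 y * Real.log s := fun y => by ring
        simp only [h3]
        rw [Finset.sum_add_distrib, ← Finset.sum_mul, hVrow x0, one_mul]
      rw [h2] at hsum
      linarith
    -- combine
    have hge : ∑ x, Pstar x * (if x = x0 then -Real.log s else (1 - ∑ y, W x y * c y))
        ≤ ∑ x, Pstar x * ∑ y, V x y * (Real.log (V x y / W x y) - Real.log (c y)) := by
      apply Finset.sum_le_sum
      intro x _
      apply mul_le_mul_of_nonneg_left _ (hPnn x)
      split
      · next hx => subst hx; exact hC2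
      · exact hB x
    have hval : ∑ x, Pstar x * (if x = x0 then -Real.log s else (1 - ∑ y, W x y * c y))
        = ε := by
      have h : ∀ x, Pstar x * (if x = x0 then -Real.log s else (1 - ∑ y, W x y * c y))
          = Pstar x * (1 - ∑ y, W x y * c y)
            + (if x = x0 then Pstar x0 * (s - 1 - Real.log s) else 0) := by
        intro x
        split
        · next hx =>
            subst hx
            rw [← hsdef]
            ring
        · ring
      simp only [h]
      rw [Finset.sum_add_distrib, Finset.sum_ite_eq' Finset.univ x0
        (fun _ => Pstar x0 * (s - 1 - Real.log s))]
      have h0 : ∑ x, Pstar x * (1 - ∑ y, W x y * c y) = 0 := by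
        have h1 : ∀ x, Pstar x * (1 - ∑ y, W x y * c y)
            = Pstar x - Pstar x * ∑ y, W x y * c y := fun x => by ring
        simp only [h1]
        rw [Finset.sum_sub_distrib, hPsum, hsum1]
        ring
      rw [h0]
      simp [hεdef]
    rw [hval] at hge
    rw [hA] at hge
    rw [hDx0] at hge
    linarith
  have hSne : S.Nonempty := by
    refine ⟨∑ x, Pstar x * ∑ y, W x0 y * Real.log (W x0 y / W x y),
      fun _ y => W x0 y, fun x y => (hW x0 y).le, fun x => hWrow x0, ?_, rfl⟩
    intro y
    rw [← Finset.sum_mul, hPsum, one_mul]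
  have hInf : C + ε ≤ sInf S := le_csInf hSne hbound
  calc Finset.univ.sup' Finset.univ_nonempty
        (fun i : X => ∑ y, W i y * Real.log (W i y / PYstar y))
      ≤ C := Finset.sup'_le _ _ (fun j _ => hL1 j)
    _ < C + ε := by linarith
    _ ≤ sInf S := hInf
    _ ≤ _ := Finset.le_sup' (fun i : X =>
          sInf { d : ℝ | ∃ V : X → Y → ℝ,
            (∀ x y, 0 ≤ V x y) ∧ (∀ x, ∑ y, V x y = 1) ∧
            (∀ y, ∑ x, Pstar x * V x y = W i y) ∧
            d = ∑ x, Pstar x * ∑ y, V x y * Real.log (V x y / W x y) })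
          (Finset.mem_univ x0)
end

section
/- Data-processing lower bound on decoding-region probability: for any event G ⊆ Y^n (the decoding region of message i) and probability measures P = P(·) and Q = P(·|M=i) on Y^n, D(P‖Q) ≥ -ln 2 + P(Gᶜ)·ln(1/Q(Gᶜ)), and consequently Q(Gᶜ) ≥ exp( -(ln 2 + D(P‖Q)) / P(Gᶜ) ) whenever P(Gᶜ) > 0. -/
open scoped BigOperators

/-- Log-sum / grouping inequality on a subset. -/
lemma gibbs_subset {Ω : Type*} [Fintype Ω] [DecidableEq Ω]
    (P Q : Ω → ℝ) (hP : ∀ ω, 0 ≤ P ω) (hQ : ∀ ω, 0 < Q ω) (S : Finset Ω) :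
    (∑ ω ∈ S, P ω) * Real.log ((∑ ω ∈ S, P ω) / (∑ ω ∈ S, Q ω))
      ≤ ∑ ω ∈ S, P ω * Real.log (P ω / Q ω) := by
  rcases S.eq_empty_or_nonempty with rfl | hS
  · simp
  set a := ∑ ω ∈ S, P ω with ha
  set b := ∑ ω ∈ S, Q ω with hb
  have hb0 : 0 < b := Finset.sum_pos (fun ω _ => hQ ω) hS
  have ha0 : 0 ≤ a := Finset.sum_nonneg fun ω _ => hP ω
  rcases eq_or_lt_of_le ha0 with h0 | hapos
  · have hz : ∀ ω ∈ S, P ω = 0 :=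
      (Finset.sum_eq_zero_iff_of_nonneg (fun ω _ => hP ω)).mp h0.symm
    rw [← h0]
    simp only [zero_mul]
    rw [Finset.sum_congr rfl (fun ω hω => by rw [hz ω hω, zero_mul])]
    simp
  have key : ∀ ω ∈ S, P ω - Q ω * a / b
      ≤ P ω * Real.log (P ω / Q ω) - P ω * Real.log (a / b) := by
    intro ω hω
    rcases eq_or_lt_of_le (hP ω) with hp0 | hppos
    · rw [← hp0]
      simp only [zero_mul, sub_zero, zero_sub, neg_nonpos]
      exact div_nonneg (mul_nonneg (hQ ω).le hapos.le) hb0.le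
    · have hx : 0 < Q ω * a / (P ω * b) :=
        div_pos (mul_pos (hQ ω) hapos) (mul_pos hppos hb0)
      have hlog := Real.log_le_sub_one_of_pos hx
      have e1 : Real.log (Q ω * a / (P ω * b))
          = (Real.log (Q ω) + Real.log a) - (Real.log (P ω) + Real.log b) := by
        rw [Real.log_div (mul_pos (hQ ω) hapos).ne' (mul_pos hppos hb0).ne',
          Real.log_mul (hQ ω).ne' hapos.ne', Real.log_mul hppos.ne' hb0.ne']
      have e2 : Real.log (a / b) = Real.log a - Real.log b :=
        Real.log_div hapos.ne' hb0.ne'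
      have e3 : Real.log (P ω / Q ω) = Real.log (P ω) - Real.log (Q ω) :=
        Real.log_div hppos.ne' (hQ ω).ne'
      have hm := mul_le_mul_of_nonneg_left hlog hppos.le
      rw [e1] at hm
      have e4 : P ω * (Q ω * a / (P ω * b) - 1) = Q ω * a / b - P ω := by
        field_simp
      rw [e4] at hm
      rw [e2, e3]
      nlinarith [hm]
  have hsum := Finset.sum_le_sum key
  have h1 : ∑ ω ∈ S, (P ω - Q ω * a / b) = a - a := by
    rw [Finset.sum_sub_distrib]
    congr 1
    rw [← Finset.sum_div, ← Finset.sum_mul, ← hb, mul_comm, mul_div_assoc,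
      div_self hb0.ne', mul_one]
  have h2 : ∑ ω ∈ S, (P ω * Real.log (P ω / Q ω) - P ω * Real.log (a / b))
      = (∑ ω ∈ S, P ω * Real.log (P ω / Q ω)) - a * Real.log (a / b) := by
    rw [Finset.sum_sub_distrib, ← Finset.sum_mul]
  rw [h1, h2] at hsum
  linarith

/-- Data-processing lower bound: for probability measures `P`, `Q` on a
finite set and an event `G`,
`D(P‖Q) ≥ -ln 2 + P(Gᶜ)·ln(1/Q(Gᶜ))`, and consequently
`Q(Gᶜ) ≥ exp(-(ln 2 + D(P‖Q))/P(Gᶜ))` whenever `P(Gᶜ) > 0`. -/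
theorem stmt_8 {Ω : Type*} [Fintype Ω] [DecidableEq Ω]
    (P Q : Ω → ℝ) (hP : ∀ ω, 0 ≤ P ω) (hPsum : ∑ ω, P ω = 1)
    (hQ : ∀ ω, 0 < Q ω) (hQsum : ∑ ω, Q ω = 1)
    (G : Finset Ω) :
    (-Real.log 2 + (∑ ω ∈ Gᶜ, P ω) * Real.log (1 / ∑ ω ∈ Gᶜ, Q ω)
        ≤ ∑ ω, P ω * Real.log (P ω / Q ω))
    ∧ (0 < ∑ ω ∈ Gᶜ, P ω →
        Real.exp (-(Real.log 2 + ∑ ω, P ω * Real.log (P ω / Q ω))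
            / (∑ ω ∈ Gᶜ, P ω))
          ≤ ∑ ω ∈ Gᶜ, Q ω) := by
  set p := ∑ ω ∈ Gᶜ, P ω with hp
  set q := ∑ ω ∈ Gᶜ, Q ω with hq
  set pG := ∑ ω ∈ G, P ω with hpG
  set qG := ∑ ω ∈ G, Q ω with hqG
  set D := ∑ ω, P ω * Real.log (P ω / Q ω) with hD
  have hPsplit : pG + p = 1 := by rw [hpG, hp, Finset.sum_add_sum_compl, hPsum]
  have hQsplit : qG + q = 1 := by rw [hqG, hq, Finset.sum_add_sum_compl, hQsum]
  have hp0 : 0 ≤ p := Finset.sum_nonneg fun ω _ => hP ω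
  have hpG0 : 0 ≤ pG := Finset.sum_nonneg fun ω _ => hP ω
  have hq0 : 0 ≤ q := Finset.sum_nonneg fun ω _ => (hQ ω).le
  have hqG0 : 0 ≤ qG := Finset.sum_nonneg fun ω _ => (hQ ω).le
  have hq1 : q ≤ 1 := by linarith
  have hqG1 : qG ≤ 1 := by linarith
  -- D ≥ grouped divergence
  have hgroup : pG * Real.log (pG / qG) + p * Real.log (p / q) ≤ D := by
    have h1 := gibbs_subset P Q hP hQ G
    have h2 := gibbs_subset P Q hP hQ Gᶜ
    have h3 : D = (∑ ω ∈ G, P ω * Real.log (P ω / Q ω))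
        + ∑ ω ∈ Gᶜ, P ω * Real.log (P ω / Q ω) := by
      rw [hD, Finset.sum_add_sum_compl]
    rw [h3]
    exact add_le_add h1 h2
  -- entropy bound
  have hent : -Real.log 2 ≤ pG * Real.log pG + p * Real.log p := by
    have hb := Real.binEntropy_le_log_two (p := p)
    rw [Real.binEntropy, Real.log_inv, Real.log_inv] at hb
    have : pG = 1 - p := by linarith
    rw [this]
    nlinarith [hb]
  -- main bound
  have main : -Real.log 2 + p * Real.log (1 / q) ≤ D := by
    rcases eq_or_lt_of_le hp0 with hpz | hppos'
    · -- p = 0 : need -log 2 ≤ D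
      rw [← hpz, zero_mul, add_zero]
      have h4 := gibbs_subset P Q hP hQ (Finset.univ : Finset Ω)
      rw [hPsum, hQsum] at h4
      simp only [div_one, Real.log_one, mul_zero] at h4
      have : (0:ℝ) < Real.log 2 := Real.log_pos (by norm_num)
      rw [← hD] at h4
      linarith
    · -- p > 0 hence Gᶜ nonempty hence q > 0
      have hGc : (Gᶜ : Finset Ω).Nonempty := by
        by_contra hc
        rw [Finset.not_nonempty_iff_eq_empty] at hc
        rw [hp, hc, Finset.sum_empty] at hppos'
        exact lt_irrefl _ hppos'
      have hqpos : 0 < q := Finset.sum_pos (fun ω _ => hQ ω) hGc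
      -- (B) p * log(p/q) = p*log p + p*log(1/q)
      have hB : p * Real.log (p / q) = p * Real.log p + p * Real.log (1 / q) := by
        rw [Real.log_div hppos'.ne' hqpos.ne', Real.log_div one_ne_zero hqpos.ne',
          Real.log_one]
        ring
      -- (A) pG * log pG ≤ pG * log(pG/qG)
      have hA : pG * Real.log pG ≤ pG * Real.log (pG / qG) := by
        rcases eq_or_lt_of_le hpG0 with hz | hpos
        · rw [← hz, zero_mul, zero_mul]
        · have hGne : G.Nonempty := by
            by_contra hc
            rw [Finset.not_nonempty_iff_eq_empty] at hc
            rw [hpG, hc, Finset.sum_empty] at hpos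
            exact lt_irrefl _ hpos
          have hqGpos : 0 < qG := Finset.sum_pos (fun ω _ => hQ ω) hGne
          have : Real.log pG ≤ Real.log (pG / qG) := by
            rw [Real.log_div hpos.ne' hqGpos.ne']
            have : Real.log qG ≤ 0 := Real.log_nonpos hqG0 hqG1
            linarith
          exact mul_le_mul_of_nonneg_left this hpG0
      linarith [hgroup, hent, hA, hB.le, hB.ge]
  refine ⟨main, fun hppos => ?_⟩
  have hGc : (Gᶜ : Finset Ω).Nonempty := by
    by_contra hc
    rw [Finset.not_nonempty_iff_eq_empty] at hc
    rw [hp, hc, Finset.sum_empty] at hppos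
    exact lt_irrefl _ hppos
  have hqpos : 0 < q := Finset.sum_pos (fun ω _ => hQ ω) hGc
  have h5 : p * Real.log (1 / q) ≤ Real.log 2 + D := by linarith [main]
  have h6 : Real.log (1 / q) = -Real.log q := by
    rw [Real.log_div one_ne_zero hqpos.ne', Real.log_one]; ring
  rw [h6] at h5
  have h7 : -(Real.log 2 + D) / p ≤ Real.log q := by
    rw [div_le_iff₀ hppos]
    nlinarith [h5]
  calc Real.exp (-(Real.log 2 + D) / p) ≤ Real.exp (Real.log q) :=
        Real.exp_le_exp.mpr h7
    _ = q := Real.exp_log hqpos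
end
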